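/- Under the position-based model with curve p and the swap-randomized logging marginal (stay probability q at base position, uniform otherwise), the variance of the single-item IPM term I{rank(y|Y₀)=target(y)}·c/P(rank(y|Y₀)=target(y)) evaluated when base(y) ≠ target(y) equals rel(y)·p_{target(y)}·( (K−1)/(1−q) − rel(y)·p_{target(y)} ), which tends to infinity as q → 1. -/

import Mathlib

open Finset Filter

/-- Under the PBM with curve `p` and the swap-randomized logging
marginal (stay probability `q` at the base position, uniform `(1-q)/(K-1)`
elsewhere), the variance of the single-item IPM term
`I{rank = target} * c / P(rank = target)` with `base ≠ target` equals
`rel y * p target * ((K-1)/(1-q) - rel y * p target)`, which tends to infinity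
as `q → 1`.  Variance is written as `E[Z²] - (E[Z])²`, with the expectation taken
over both the rank randomization and the Bernoulli click. -/
theorem ipm_term_variance_swap_randomized
    (K : ℕ) (A : Type*) [Fintype A] [DecidableEq A]
    (p : Fin K → ℝ) (hp0 : ∀ k, 0 < p k) (hp1 : ∀ k, p k ≤ 1)
    (rel : A → ℝ) (y : A) (hrel0 : 0 ≤ rel y) (hrel1 : rel y ≤ 1)
    (base target : Fin K) (hbt : base ≠ target)
    (q : ℝ) (hq0 : 0 < q) (hq1 : q < 1)
    (m : Fin K → ℝ)
    (hmbase : m base = q)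
    (hmother : ∀ k : Fin K, k ≠ base → m k = (1 - q) / ((K : ℝ) - 1)) :
    ((∑ r : Fin K, m r *
        ((rel y * p r) * ((if r = target then (1 : ℝ) else 0) / ((1 - q) / ((K : ℝ) - 1))) ^ 2 +
          (1 - rel y * p r) * ((0 : ℝ)) ^ 2)) -
      (∑ r : Fin K, m r *
        ((rel y * p r) * ((if r = target then (1 : ℝ) else 0) / ((1 - q) / ((K : ℝ) - 1))) +
          (1 - rel y * p r) * 0)) ^ 2 =
      rel y * p target * (((K : ℝ) - 1) / (1 - q) - rel y * p target)) ∧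
    (0 < rel y →
      Tendsto (fun q' : ℝ => rel y * p target * (((K : ℝ) - 1) / (1 - q') - rel y * p target))
        (nhdsWithin 1 (Set.Iio 1)) atTop) := by
  have hK : (1 : ℕ) < K := by
    have : Nontrivial (Fin K) := ⟨base, target, hbt⟩
    simpa using Fintype.one_lt_card_iff_nontrivial.mpr this
  have hK1 : (0 : ℝ) < (K : ℝ) - 1 := by
    have : (1 : ℝ) < (K : ℝ) := by exact_mod_cast hK
    linarith
  have hq1' : (0 : ℝ) < 1 - q := by linarith
  have hc : (0 : ℝ) < (1 - q) / ((K : ℝ) - 1) := div_pos hq1' hK1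
  have hmt : m target = (1 - q) / ((K : ℝ) - 1) := hmother target (Ne.symm hbt)
  constructor
  · have h1 : (∑ r : Fin K, m r *
        ((rel y * p r) * ((if r = target then (1 : ℝ) else 0) / ((1 - q) / ((K : ℝ) - 1))) ^ 2 +
          (1 - rel y * p r) * ((0 : ℝ)) ^ 2))
        = rel y * p target * (((K : ℝ) - 1) / (1 - q)) := by
      rw [Finset.sum_eq_single target]
      · rw [hmt, if_pos rfl]
        field_simp
        ring
      · intro r _ hr
        simp [hr]
      · simp
    have h2 : (∑ r : Fin K, m r *
        ((rel y * p r) * ((if r = target then (1 : ℝ) else 0) / ((1 - q) / ((K : ℝ) - 1))) +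
          (1 - rel y * p r) * 0)) = rel y * p target := by
      rw [Finset.sum_eq_single target]
      · rw [hmt, if_pos rfl]
        field_simp
        ring
      · intro r _ hr
        simp [hr]
      · simp
    rw [h1, h2]; ring
  · intro hrelpos
    have hpt := hp0 target
    have hC : 0 < rel y * p target := mul_pos hrelpos hpt
    have h1 : Tendsto (fun q' : ℝ => 1 - q') (nhdsWithin 1 (Set.Iio 1)) (nhdsWithin 0 (Set.Ioi 0)) := by
      apply tendsto_nhdsWithin_of_tendsto_nhds_of_eventually_within
      · have : Tendsto (fun q' : ℝ => 1 - q') (nhds 1) (nhds (1 - 1)) :=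
          (tendsto_const_nhds.sub tendsto_id)
        simpa using this.mono_left nhdsWithin_le_nhds
      · filter_upwards [self_mem_nhdsWithin] with x hx
        simp only [Set.mem_Iio] at hx
        simp [Set.mem_Ioi]; linarith
    have h2 : Tendsto (fun q' : ℝ => ((K : ℝ) - 1) / (1 - q')) (nhdsWithin 1 (Set.Iio 1)) atTop := by
      have hinv : Tendsto (fun q' : ℝ => (1 - q')⁻¹) (nhdsWithin 1 (Set.Iio 1)) atTop :=
        tendsto_inv_nhdsGT_zero.comp h1
      simpa [div_eq_mul_inv] using hinv.const_mul_atTop hK1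
    have h3 : Tendsto (fun q' : ℝ => ((K : ℝ) - 1) / (1 - q') - rel y * p target)
        (nhdsWithin 1 (Set.Iio 1)) atTop := tendsto_atTop_add_const_right _ _ h2
    exact h3.const_mul_atTop hC
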